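/- For each fixed η ≥ 0 and each fixed k ≥ 0, the values ζ(η, ω, k) for 0 ≤ ω ≤ min{η, k} sum to 1: Σ_{ω=0}^{min(η,k)} ζ(η,ω,k) = 1, where ζ(η,ω,k) = S(ω, k−ω)·2^{−(k−ω)(η−ω)}·∏_{i=1}^{ω}(1 − 2^{−(η+1−i)}). -/

import Mathlib

/-- `S ω l` = sum over all nondecreasing tuples `0 ≤ i₁ ≤ ⋯ ≤ i_l ≤ ω`
of `2^{-(i₁+⋯+i_l)}`, with `S ω 0 = 1`. -/
noncomputable def S (ω l : ℕ) : ℝ := by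
  classical
  exact ∑ f ∈ Finset.univ.filter (fun f : Fin l → Fin (ω + 1) => Monotone f),
    (1 / 2 : ℝ) ^ (∑ i, (f i : ℕ))

/-- The conditional Kovalenko rank distribution value. -/
noncomputable def zeta (η ω k : ℕ) : ℝ :=
  S ω (k - ω) * (1 / 2 : ℝ) ^ ((k - ω) * (η - ω)) *
    ∏ i ∈ Finset.Icc 1 ω, (1 - (1 / 2 : ℝ) ^ (η + 1 - i))


lemma S_zero_right (ω : ℕ) : S ω 0 = 1 := by
  simp [S, Finset.filter_true_of_mem, Subsingleton.monotone]

lemma S_zero_left (l : ℕ) : S 0 l = 1 := by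
  simp [S, Finset.filter_true_of_mem, Subsingleton.monotone, Finset.filter_singleton, monotone_const]

lemma mono_cons {l m : ℕ} {g : Fin l → Fin (m+1)} (hg : Monotone g) :
    Monotone (Fin.cons 0 g) := by
  intro i j hij
  induction j using Fin.cases with
  | zero => rw [Fin.le_zero_iff] at hij; subst hij; exact le_rfl
  | succ j =>
    induction i using Fin.cases with
    | zero => simp only [Fin.cons_zero]; exact Fin.zero_le _
    | succ i =>
      simp only [Fin.cons_succ]
      exact hg (Fin.succ_le_succ_iff.mp hij)

lemma S_rec (ω l : ℕ) :
    S (ω+1) (l+1) = S (ω+1) l + (1/2:ℝ)^(l+1) * S ω (l+1) := by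
  classical
  rw [show S (ω+1) (l+1) = ∑ f ∈ Finset.univ.filter
      (fun f : Fin (l+1) → Fin (ω+2) => Monotone f), (1/2:ℝ) ^ (∑ i, (f i : ℕ)) from rfl]
  rw [← Finset.sum_filter_add_sum_filter_not _ (fun f : Fin (l+1) → Fin (ω+2) => f 0 = 0)]
  have key : ∀ (f : Fin (l+1) → Fin (ω+2)), Monotone f → ¬ f 0 = 0 → ∀ i, f i ≠ 0 := by
    intro f hf h0 i hi
    exact h0 (Fin.le_zero_iff.mp (hi ▸ hf (Fin.zero_le i)))
  congr 1
  · rw [show S (ω+1) l = ∑ f ∈ Finset.univ.filter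
        (fun f : Fin l → Fin (ω+2) => Monotone f), (1/2:ℝ) ^ (∑ i, (f i : ℕ)) from rfl]
    refine Finset.sum_bij' (fun f _ => f ∘ Fin.succ) (fun g _ => Fin.cons 0 g)
      ?_ ?_ ?_ ?_ ?_
    · intro f hf
      simp only [Finset.mem_filter, Finset.mem_univ, true_and] at hf ⊢
      exact hf.1.comp Fin.strictMono_succ.monotone
    · intro g hg
      simp only [Finset.mem_filter, Finset.mem_univ, true_and] at hg ⊢
      exact ⟨mono_cons hg, Fin.cons_zero _ _⟩
    · intro f hf
      simp only [Finset.mem_filter, Finset.mem_univ, true_and] at hf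
      funext i
      induction i using Fin.cases with
      | zero => simp [hf.2]
      | succ i => simp
    · intro g hg
      funext i
      simp
    · intro f hf
      simp only [Finset.mem_filter, Finset.mem_univ, true_and] at hf
      congr 1
      rw [Fin.sum_univ_succ, hf.2]
      simp
  · rw [show S ω (l+1) = ∑ f ∈ Finset.univ.filter
        (fun f : Fin (l+1) → Fin (ω+1) => Monotone f), (1/2:ℝ) ^ (∑ i, (f i : ℕ)) from rfl]
    rw [Finset.mul_sum]
    refine Finset.sum_bij' (fun f hf => fun i => (f i).pred (by
        simp only [Finset.mem_filter, Finset.mem_univ, true_and] at hf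
        exact key f hf.1 hf.2 i))
      (fun g _ => fun i => (g i).succ) ?_ ?_ ?_ ?_ ?_
    · intro f hf
      simp only [Finset.mem_filter, Finset.mem_univ, true_and] at hf ⊢
      intro i j hij
      simp only [Fin.pred_le_pred_iff]
      exact hf.1 hij
    · intro g hg
      simp only [Finset.mem_filter, Finset.mem_univ, true_and] at hg ⊢
      exact ⟨fun i j hij => Fin.succ_le_succ_iff.mpr (hg hij), Fin.succ_ne_zero _⟩
    · intro f hf; funext i; simp
    · intro g hg; funext i; simp
    · intro f hf
      simp only [Finset.mem_filter, Finset.mem_univ, true_and] at hf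
      rw [← pow_add]
      congr 1
      have h1 : ∀ i : Fin (l+1), (f i : ℕ) =
          ((f i).pred (key f hf.1 hf.2 i) : ℕ) + 1 := by
        intro i
        have h2 : (f i : ℕ) ≠ 0 := by
          intro h
          exact key f hf.1 hf.2 i (Fin.ext h)
        simp only [Fin.coe_pred]
        omega
      rw [Finset.sum_congr rfl (fun i _ => h1 i), Finset.sum_add_distrib]
      simp [add_comm]


lemma zeta_zero (η k : ℕ) : zeta η 0 k = (1/2:ℝ)^(k*η) := by
  simp [zeta, S_zero_left]

lemma zeta_zero_succ (η k : ℕ) : zeta η 0 (k+1) = (1/2:ℝ)^(η-0) * zeta η 0 k := by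
  rw [zeta_zero, zeta_zero, ← pow_add]
  congr 1
  ring_nf
  omega

lemma zeta_succ (η ω k : ℕ) (hη : ω + 1 ≤ η) (hk : ω + 1 ≤ k) :
    zeta η (ω+1) (k+1) = (1/2:ℝ)^(η-(ω+1)) * zeta η (ω+1) k
      + (1 - (1/2:ℝ)^(η-ω)) * zeta η ω k := by
  obtain ⟨l, rfl⟩ : ∃ l, k = ω + 1 + l := ⟨k - (ω+1), by omega⟩
  obtain ⟨e, rfl⟩ : ∃ e, η = ω + 1 + e := ⟨η - (ω+1), by omega⟩
  unfold zeta
  have h1 : ω + 1 + l + 1 - (ω + 1) = l + 1 := by omega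
  have h2 : ω + 1 + l - (ω + 1) = l := by omega
  have h3 : ω + 1 + l - ω = l + 1 := by omega
  have h4 : ω + 1 + e - (ω + 1) = e := by omega
  have h5 : ω + 1 + e - ω = e + 1 := by omega
  rw [h1, h2, h3, h4, h5, S_rec]
  rw [Finset.prod_Icc_succ_top (by omega : 1 ≤ ω + 1)]
  have h6 : ω + 1 + e + 1 - (ω + 1) = e + 1 := by omega
  rw [h6]
  have e1 : (l+1)*e = l*e + e := by ring
  have e2 : (l+1)*(e+1) = (l*e + e) + (l + 1) := by ring
  rw [e1, e2, pow_add, pow_add, pow_add]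
  ring

lemma zeta_diag (η k : ℕ) (h : k + 1 ≤ η) :
    zeta η (k+1) (k+1) = (1 - (1/2:ℝ)^(η-k)) * zeta η k k := by
  unfold zeta
  rw [Nat.sub_self, Nat.sub_self, S_zero_right, S_zero_right]
  rw [Finset.prod_Icc_succ_top (by omega : 1 ≤ k+1)]
  have : η + 1 - (k+1) = η - k := by omega
  rw [this]
  ring

/-- For fixed `η` and `k`, the values `ζ(η,ω,k)`, `0 ≤ ω ≤ min{η,k}`, sum to `1`. -/
theorem stmt_15 (η k : ℕ) :
    ∑ ω ∈ Finset.range (min η k + 1), zeta η ω k = 1 := by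
  induction k with
  | zero =>
    simp [zeta, S_zero_right]
  | succ k ih =>
    set g : ℕ → ℝ := fun ω => (1/2:ℝ)^(η-ω) * zeta η ω k with hg
    set h : ℕ → ℝ := fun ω => (1 - (1/2:ℝ)^(η-ω)) * zeta η ω k with hh
    have hgh : ∀ ω, g ω + h ω = zeta η ω k := by intro ω; simp [hg, hh]; ring
    rcases le_or_gt (k+1) η with hle | hlt
    · have hmin1 : min η (k+1) = k+1 := by omega
      have hmin0 : min η k = k := by omega
      rw [hmin1]
      rw [hmin0] at ih
      calc ∑ ω ∈ Finset.range (k+1+1), zeta η ω (k+1)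
          = ∑ ω ∈ Finset.range (k+1), zeta η ω (k+1) + zeta η (k+1) (k+1) :=
            Finset.sum_range_succ _ _
        _ = ((∑ ω ∈ Finset.range k, zeta η (ω+1) (k+1)) + zeta η 0 (k+1))
              + zeta η (k+1) (k+1) := by rw [Finset.sum_range_succ']
        _ = ((∑ ω ∈ Finset.range k, (g (ω+1) + h ω)) + g 0) + h k := by
            rw [zeta_zero_succ, zeta_diag η k hle]
            congr 1
            congr 1
            refine Finset.sum_congr rfl fun ω hω => ?_
            rw [Finset.mem_range] at hω
            exact zeta_succ η ω k (by omega) (by omega)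
        _ = ((∑ ω ∈ Finset.range k, g (ω+1)) + g 0)
              + ((∑ ω ∈ Finset.range k, h ω) + h k) := by
            rw [Finset.sum_add_distrib]; ring
        _ = (∑ ω ∈ Finset.range (k+1), g ω) + (∑ ω ∈ Finset.range (k+1), h ω) := by
            rw [Finset.sum_range_succ', Finset.sum_range_succ]
        _ = ∑ ω ∈ Finset.range (k+1), zeta η ω k := by
            rw [← Finset.sum_add_distrib]
            exact Finset.sum_congr rfl fun ω _ => hgh ω
        _ = 1 := ih
    · have hmin1 : min η (k+1) = η := by omega
      have hmin0 : min η k = η := by omega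
      rw [hmin1]
      rw [hmin0] at ih
      have hη0 : h η = 0 := by simp [hh, Nat.sub_self]
      calc ∑ ω ∈ Finset.range (η+1), zeta η ω (k+1)
          = (∑ ω ∈ Finset.range η, zeta η (ω+1) (k+1)) + zeta η 0 (k+1) :=
            Finset.sum_range_succ' _ _
        _ = (∑ ω ∈ Finset.range η, (g (ω+1) + h ω)) + g 0 := by
            rw [zeta_zero_succ]
            congr 1
            refine Finset.sum_congr rfl fun ω hω => ?_
            rw [Finset.mem_range] at hω
            exact zeta_succ η ω k (by omega) (by omega)
        _ = ((∑ ω ∈ Finset.range η, g (ω+1)) + g 0) + (∑ ω ∈ Finset.range η, h ω) := by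
            rw [Finset.sum_add_distrib]; ring
        _ = (∑ ω ∈ Finset.range (η+1), g ω) + (∑ ω ∈ Finset.range (η+1), h ω) := by
            rw [Finset.sum_range_succ', Finset.sum_range_succ, hη0, add_zero]
        _ = ∑ ω ∈ Finset.range (η+1), zeta η ω k := by
            rw [← Finset.sum_add_distrib]
            exact Finset.sum_congr rfl fun ω _ => hgh ω
        _ = 1 := ih
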